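/- For all sufficiently large ℓ (so that t_ℓ, μ_s(ℓ) and μ_u(ℓ) are defined), the vectors (1, (1 − μ_s(ℓ))·y_ℓ/K) and (1, (1 − μ_u(ℓ))·y_ℓ/K) are eigenvectors of the matrix M_ℓ = [[1, −K/y_ℓ], [λ·c_ℓ, δ·y_ℓ^{δ−1} − (λK/y_ℓ)·c_ℓ]] (with c_ℓ = √(1 − ((y_ℓ − y_ℓ^δ)/λ)²)) for the eigenvalues μ_s(ℓ) and μ_u(ℓ) respectively; moreover (1 − μ_s(ℓ))·y_ℓ/K → 0 and (1 − μ_u(ℓ))·y_ℓ/K → λ as ℓ → ∞, i.e., the normalized stable directions tend to (1,0) and the normalized unstable directions tend to the direction of (1,λ). -/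

import Mathlib

open Filter Topology Matrix

/-- `y_ℓ = exp(−2πℓ/K)`, the `y`-coordinate of the fixed point `p_ℓ`. -/
noncomputable def yFix (K : ℝ) (ℓ : ℕ) : ℝ :=
  Real.exp (-(2 * Real.pi * (ℓ : ℝ)) / K)

/-- `d_ℓ = δ·exp(−2π(δ−1)ℓ/K)`, the determinant of the derivative at `p_ℓ`. -/
noncomputable def detFix (K δ : ℝ) (ℓ : ℕ) : ℝ :=
  δ * Real.exp (-(2 * Real.pi * (δ - 1) * (ℓ : ℝ)) / K)

/-- `t_ℓ`, the trace of the derivative at `p_ℓ`. -/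
noncomputable def traceFix (K δ lam : ℝ) (ℓ : ℕ) : ℝ :=
  1 + δ * Real.exp (-(2 * Real.pi * (δ - 1) * (ℓ : ℝ)) / K)
    - K * Real.exp (2 * Real.pi * (ℓ : ℝ) / K) *
      Real.sqrt (lam ^ 2 - (yFix K ℓ - yFix K ℓ ^ δ) ^ 2)

/-- `μ_s(ℓ)`, the stable eigenvalue at `p_ℓ`. -/
noncomputable def muS (K δ lam : ℝ) (ℓ : ℕ) : ℝ :=
  (traceFix K δ lam ℓ + Real.sqrt (traceFix K δ lam ℓ ^ 2 - 4 * detFix K δ ℓ)) / 2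

/-- `μ_u(ℓ)`, the unstable eigenvalue at `p_ℓ`. -/
noncomputable def muU (K δ lam : ℝ) (ℓ : ℕ) : ℝ :=
  (traceFix K δ lam ℓ - Real.sqrt (traceFix K δ lam ℓ ^ 2 - 4 * detFix K δ ℓ)) / 2

/-- `c_ℓ = cos x_ℓ`. -/
noncomputable def cosFix (K δ lam : ℝ) (ℓ : ℕ) : ℝ :=
  Real.sqrt (1 - ((yFix K ℓ - yFix K ℓ ^ δ) / lam) ^ 2)

/-- `M_ℓ`, the derivative of the model first-return map at the fixed point `p_ℓ`. -/
noncomputable def derivFix (K δ lam : ℝ) (ℓ : ℕ) : Matrix (Fin 2) (Fin 2) ℝ :=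
  !![1, -K / yFix K ℓ;
     lam * cosFix K δ lam ℓ,
       δ * yFix K ℓ ^ (δ - 1) - (lam * K / yFix K ℓ) * cosFix K δ lam ℓ]

lemma yFix_pos (K : ℝ) (ℓ : ℕ) : 0 < yFix K ℓ := Real.exp_pos _

lemma yFix_rpow (K b : ℝ) (ℓ : ℕ) :
    yFix K ℓ ^ b = Real.exp (-(2 * Real.pi * b * (ℓ : ℝ)) / K) := by
  rw [yFix, ← Real.exp_mul]
  congr 1; ring

lemma exp_mul_yFix (K : ℝ) (ℓ : ℕ) :
    Real.exp (2 * Real.pi * (ℓ : ℝ) / K) * yFix K ℓ = 1 := by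
  rw [yFix, ← Real.exp_add,
    show 2 * Real.pi * (ℓ : ℝ) / K + -(2 * Real.pi * (ℓ : ℝ)) / K = 0 by ring,
    Real.exp_zero]

lemma detFix_eq (K δ : ℝ) (ℓ : ℕ) : detFix K δ ℓ = δ * yFix K ℓ ^ (δ - 1) := by
  rw [detFix, yFix_rpow]

lemma lam_cos (K δ lam : ℝ) (hlam : 0 < lam) (ℓ : ℕ) :
    lam * cosFix K δ lam ℓ =
      Real.sqrt (lam ^ 2 - (yFix K ℓ - yFix K ℓ ^ δ) ^ 2) := by
  rw [cosFix, ← Real.sqrt_sq hlam.le, ← Real.sqrt_mul (sq_nonneg lam)]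
  rw [Real.sqrt_sq hlam.le]
  congr 1
  field_simp

-- tendsto of exp(c * ℓ) to 0 for c < 0
lemma tendsto_exp_neg_const (c : ℝ) (hc : c < 0) :
    Tendsto (fun ℓ : ℕ => Real.exp (c * ℓ)) atTop (𝓝 0) := by
  apply Real.tendsto_exp_atBot.comp
  exact (tendsto_const_mul_atBot_of_neg hc).2 (tendsto_natCast_atTop_atTop (R := ℝ))

lemma root_quad (t d : ℝ) (h : 0 ≤ t ^ 2 - 4 * d) (ε : ℝ) (hε : ε = 1 ∨ ε = -1) :
    ((t + ε * Real.sqrt (t ^ 2 - 4 * d)) / 2) ^ 2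
      - t * ((t + ε * Real.sqrt (t ^ 2 - 4 * d)) / 2) + d = 0 := by
  have hs := Real.sq_sqrt h
  rcases hε with rfl | rfl <;> linear_combination (1 / 4 : ℝ) * hs

lemma eigen_eq (K δ lam : ℝ) (hK : 0 < K) (hlam : 0 < lam) (ℓ : ℕ) (μ : ℝ)
    (hq : μ ^ 2 - traceFix K δ lam ℓ * μ + detFix K δ ℓ = 0) :
    (derivFix K δ lam ℓ).mulVec ![1, (1 - μ) * yFix K ℓ / K] =
      μ • ![1, (1 - μ) * yFix K ℓ / K] := by
  have hy := yFix_pos K ℓ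
  have hlc := lam_cos K δ lam hlam ℓ
  set r := Real.sqrt (lam ^ 2 - (yFix K ℓ - yFix K ℓ ^ δ) ^ 2) with hr
  have hc : cosFix K δ lam ℓ = r / lam := by
    rw [← hlc]; field_simp
  have hE := exp_mul_yFix K ℓ
  have hq' : μ ^ 2 - (1 + δ * yFix K ℓ ^ (δ - 1)
      - K * Real.exp (2 * Real.pi * (ℓ : ℝ) / K) * r) * μ
      + δ * yFix K ℓ ^ (δ - 1) = 0 := by
    rw [traceFix, detFix] at hq
    rw [← yFix_rpow K (δ-1) ℓ] at hq
    convert hq using 3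
  have hq3 : μ ^ 2 * yFix K ℓ - (1 + δ * yFix K ℓ ^ (δ - 1)) * μ * yFix K ℓ
      + K * r * μ + δ * yFix K ℓ ^ (δ - 1) * yFix K ℓ = 0 := by
    linear_combination yFix K ℓ * hq' - K * r * μ * hE
  funext i
  fin_cases i
  · simp [derivFix, mulVec, dotProduct, Fin.sum_univ_two]
    field_simp
    ring
  · simp [derivFix, mulVec, dotProduct, Fin.sum_univ_two, hc]
    field_simp
    linear_combination hq3

/-- explicit eigenvectors of `M_ℓ` and their limiting directions. -/
theorem eigenvectors_derivFix (K δ lam : ℝ) (hK : 0 < K) (hδ : 1 < δ) (hlam : 0 < lam) :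
    (∃ L : ℕ, ∀ ℓ ≥ L,
      (derivFix K δ lam ℓ).mulVec ![1, (1 - muS K δ lam ℓ) * yFix K ℓ / K] =
        muS K δ lam ℓ • ![1, (1 - muS K δ lam ℓ) * yFix K ℓ / K] ∧
      (derivFix K δ lam ℓ).mulVec ![1, (1 - muU K δ lam ℓ) * yFix K ℓ / K] =
        muU K δ lam ℓ • ![1, (1 - muU K δ lam ℓ) * yFix K ℓ / K]) ∧
    Tendsto (fun ℓ => (1 - muS K δ lam ℓ) * yFix K ℓ / K) atTop (𝓝 0) ∧
    Tendsto (fun ℓ => (1 - muU K δ lam ℓ) * yFix K ℓ / K) atTop (𝓝 lam) := by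
  have hπ := Real.pi_pos
  -- basic limits
  have hy0 : Tendsto (fun ℓ => yFix K ℓ) atTop (𝓝 0) := by
    apply (tendsto_exp_neg_const (-(2 * Real.pi) / K) (by
      apply div_neg_of_neg_of_pos (by linarith) hK)).congr
    intro ℓ; rw [yFix]; congr 1; ring
  have hyd : Tendsto (fun ℓ => yFix K ℓ ^ δ) atTop (𝓝 0) := by
    apply (tendsto_exp_neg_const (-(2 * Real.pi * δ) / K) (by
      apply div_neg_of_neg_of_pos (by nlinarith) hK)).congr
    intro ℓ; rw [yFix_rpow]; congr 1; ring
  have hd0 : Tendsto (fun ℓ => detFix K δ ℓ) atTop (𝓝 0) := by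
    have := (tendsto_exp_neg_const (-(2 * Real.pi * (δ - 1)) / K) (by
      apply div_neg_of_neg_of_pos (by nlinarith) hK)).const_mul δ
    simp only [mul_zero] at this
    apply this.congr
    intro ℓ; rw [detFix]; congr 2; ring
  have hw0 : Tendsto (fun ℓ => yFix K ℓ - yFix K ℓ ^ δ) atTop (𝓝 0) := by
    simpa using hy0.sub hyd
  have hrlim : Tendsto (fun ℓ => Real.sqrt (lam ^ 2 - (yFix K ℓ - yFix K ℓ ^ δ) ^ 2))
      atTop (𝓝 lam) := by
    have h1 : Tendsto (fun ℓ => lam ^ 2 - (yFix K ℓ - yFix K ℓ ^ δ) ^ 2) atTop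
        (𝓝 (lam ^ 2)) := by
      simpa using (tendsto_const_nhds (x := lam ^ 2)).sub (hw0.pow 2)
    have := (Real.continuous_sqrt.continuousAt (x := lam ^ 2)).tendsto.comp h1
    rwa [Real.sqrt_sq hlam.le] at this
  have hKe : Tendsto (fun ℓ : ℕ => K * Real.exp (2 * Real.pi * (ℓ : ℝ) / K)) atTop atTop := by
    apply Tendsto.const_mul_atTop hK
    apply Real.tendsto_exp_atTop.comp
    apply ((tendsto_const_mul_atTop_of_pos (r := 2 * Real.pi / K) (by positivity)).2
      (tendsto_natCast_atTop_atTop (R := ℝ))).congr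
    intro ℓ; ring
  have hbig : Tendsto (fun ℓ : ℕ => K * Real.exp (2 * Real.pi * (ℓ : ℝ) / K) *
      Real.sqrt (lam ^ 2 - (yFix K ℓ - yFix K ℓ ^ δ) ^ 2)) atTop atTop :=
    Filter.Tendsto.atTop_mul_pos hlam hKe hrlim
  -- eventual facts
  have hdnn : ∀ ℓ, 0 ≤ detFix K δ ℓ := fun ℓ => by
    rw [detFix]; positivity
  have e2 : ∀ᶠ ℓ in atTop, detFix K δ ℓ ≤ 1 := by
    have := hd0.eventually (eventually_le_nhds (by norm_num : (0:ℝ) < 1))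
    exact this
  have e3 := hbig.eventually_ge_atTop (5:ℝ)
  have et : ∀ᶠ ℓ in atTop, traceFix K δ lam ℓ ≤ -3 := by
    filter_upwards [e2, e3] with ℓ h2 h3
    have : traceFix K δ lam ℓ = 1 + detFix K δ ℓ
        - K * Real.exp (2 * Real.pi * (ℓ : ℝ) / K) *
          Real.sqrt (lam ^ 2 - (yFix K ℓ - yFix K ℓ ^ δ) ^ 2) := by
      rw [traceFix, detFix]
    rw [this]; linarith
  have edisc : ∀ᶠ ℓ in atTop, 0 ≤ traceFix K δ lam ℓ ^ 2 - 4 * detFix K δ ℓ := by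
    filter_upwards [et, e2] with ℓ h1 h2
    nlinarith [hdnn ℓ]
  refine ⟨?_, ?_, ?_⟩
  · obtain ⟨L, hL⟩ := eventually_atTop.1 edisc
    refine ⟨L, fun ℓ hℓ => ?_⟩
    constructor
    · exact eigen_eq K δ lam hK hlam ℓ _
        (by simpa [muS] using root_quad (traceFix K δ lam ℓ) (detFix K δ ℓ) (hL ℓ hℓ) 1 (Or.inl rfl))
    · exact eigen_eq K δ lam hK hlam ℓ _
        (by simpa [muU, ← sub_eq_add_neg] using root_quad (traceFix K δ lam ℓ) (detFix K δ ℓ) (hL ℓ hℓ) (-1) (Or.inr rfl))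
  -- muS → 0 and the first limit
  · have hmuS : Tendsto (fun ℓ => muS K δ lam ℓ) atTop (𝓝 0) := by
      have hlow : Tendsto (fun ℓ => -detFix K δ ℓ) atTop (𝓝 0) := by
        simpa using hd0.neg
      apply tendsto_of_tendsto_of_tendsto_of_le_of_le' hlow tendsto_const_nhds
      · filter_upwards [et, e2, edisc] with ℓ h1 h2 h3
        set t := traceFix K δ lam ℓ
        set d := detFix K δ ℓ
        have hd := hdnn ℓ
        have hs2 := Real.sq_sqrt h3
        have hs0 := Real.sqrt_nonneg (t ^ 2 - 4 * d)
        set s := Real.sqrt (t ^ 2 - 4 * d)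
        rw [muS]
        nlinarith [sq_nonneg (s - (-t - 2*d)), sq_nonneg (s + t + 2*d)]
      · filter_upwards [et, e2, edisc] with ℓ h1 h2 h3
        set t := traceFix K δ lam ℓ
        set d := detFix K δ ℓ
        have hd := hdnn ℓ
        have hs2 := Real.sq_sqrt h3
        have hs0 := Real.sqrt_nonneg (t ^ 2 - 4 * d)
        set s := Real.sqrt (t ^ 2 - 4 * d)
        rw [muS]
        nlinarith [sq_nonneg (s + t)]
    have := ((tendsto_const_nhds (x := (1:ℝ))).sub hmuS).mul hy0
    have h2 := this.div_const K
    simpa using h2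
  -- muU limit
  · have hty : Tendsto (fun ℓ => traceFix K δ lam ℓ * yFix K ℓ) atTop (𝓝 (-(K * lam))) := by
      have h1 : Tendsto (fun ℓ => yFix K ℓ + detFix K δ ℓ * yFix K ℓ
          - K * Real.sqrt (lam ^ 2 - (yFix K ℓ - yFix K ℓ ^ δ) ^ 2)) atTop
          (𝓝 (0 + 0 * 0 - K * lam)) :=
        (hy0.add (hd0.mul hy0)).sub (hrlim.const_mul K)
      rw [show (0:ℝ) + 0 * 0 - K * lam = -(K * lam) by ring] at h1
      apply h1.congr
      intro ℓ
      have hE := exp_mul_yFix K ℓ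
      rw [traceFix, ← detFix]
      linear_combination K * Real.sqrt (lam ^ 2 - (yFix K ℓ - yFix K ℓ ^ δ) ^ 2) * hE
    have hsy : Tendsto (fun ℓ => Real.sqrt (traceFix K δ lam ℓ ^ 2 - 4 * detFix K δ ℓ)
        * yFix K ℓ) atTop (𝓝 (K * lam)) := by
      have hinner : Tendsto (fun ℓ => (traceFix K δ lam ℓ * yFix K ℓ) ^ 2
          - 4 * detFix K δ ℓ * yFix K ℓ * yFix K ℓ) atTop
          (𝓝 ((-(K * lam)) ^ 2 - 4 * 0 * 0 * 0)) := by
        exact (hty.pow 2).sub ((((hd0.const_mul 4).mul hy0)).mul hy0)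
      rw [show (-(K * lam)) ^ 2 - 4 * 0 * 0 * 0 = (K * lam) ^ 2 by ring] at hinner
      have hcomp := (Real.continuous_sqrt.continuousAt (x := (K * lam) ^ 2)).tendsto.comp hinner
      rw [Real.sqrt_sq (by positivity : (0:ℝ) ≤ K * lam)] at hcomp
      apply hcomp.congr' _
      filter_upwards [edisc] with ℓ h3
      have hy := (yFix_pos K ℓ).le
      rw [Function.comp_apply, show (traceFix K δ lam ℓ * yFix K ℓ) ^ 2
          - 4 * detFix K δ ℓ * yFix K ℓ * yFix K ℓ
          = (traceFix K δ lam ℓ ^ 2 - 4 * detFix K δ ℓ) * yFix K ℓ ^ 2 by ring,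
        Real.sqrt_mul h3, Real.sqrt_sq hy]
    have hmy : Tendsto (fun ℓ => muU K δ lam ℓ * yFix K ℓ) atTop (𝓝 (-(K * lam))) := by
      have := (hty.sub hsy).div_const 2
      rw [show (-(K * lam) - K * lam) / 2 = -(K * lam) by ring] at this
      apply this.congr
      intro ℓ; rw [muU]; ring
    have hfin := (hy0.sub hmy).div_const K
    rw [show (0 - -(K * lam)) / K = lam by field_simp; ring] at hfin
    apply hfin.congr
    intro ℓ; ring
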